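/- A continuous self-map φ of a compact metric space all of whose orbits converge to a single fixed point p has topological entropy zero. -/

import Mathlib

open Filter

variable {M : Type*}

/-- `S` is `(K,δ)`-separated for the map `φ` and distance function `d`: any two distinct
points of `S` are at distance `≥ δ` at some iterate `φ^k`, `0 ≤ k ≤ K`. -/
def IsSeparatedSet (d : M → M → ℝ) (φ : M → M) (K : ℕ) (δ : ℝ) (S : Finset M) : Prop :=
  ∀ x ∈ S, ∀ y ∈ S, x ≠ y → ∃ k ≤ K, δ ≤ d (φ^[k] x) (φ^[k] y)

/-- Maximal cardinality of a `(K,δ)`-separated set. -/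
noncomputable def sepNum (d : M → M → ℝ) (φ : M → M) (K : ℕ) (δ : ℝ) : ℕ :=
  sSup {n : ℕ | ∃ S : Finset M, IsSeparatedSet d φ K δ S ∧ S.card = n}

/-- Bowen–Dinaburg topological entropy of `φ` with respect to the distance function `d`,
valued in the extended reals. -/
noncomputable def htop (d : M → M → ℝ) (φ : M → M) : EReal :=
  ⨆ δ : {δ : ℝ // 0 < δ},
    Filter.limsup (fun K : ℕ => ((Real.log (sepNum d φ K δ.1) / K : ℝ) : EReal))
      Filter.atTop

set_option linter.unusedSectionVars false
set_option maxHeartbeats 1000000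

namespace HtopZeroAux

/-! ### Combinatorial counting lemmas -/

lemma sum_range_choose_le (N s : ℕ) :
    ∑ j ∈ Finset.range (s + 1), N.choose j ≤ (N + s).choose s := by
  induction s with
  | zero => simp
  | succ s ih =>
      rw [Finset.sum_range_succ]
      have h2 : N.choose (s + 1) ≤ (N + s).choose (s + 1) :=
        Nat.choose_le_choose _ (Nat.le_add_right _ _)
      calc ∑ j ∈ Finset.range (s + 1), N.choose j + N.choose (s + 1)
          ≤ (N + s).choose s + (N + s).choose (s + 1) := Nat.add_le_add ih h2
        _ = (N + (s + 1)).choose (s + 1) := by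
            rw [← Nat.add_assoc, Nat.choose_succ_succ']

lemma card_small_subsets {α : Type*} [DecidableEq α] (T : Finset α) (s : ℕ) :
    ((T.powerset).filter (fun A => A.card ≤ s)).card ≤ (T.card + s).choose s := by
  have hsub : (T.powerset).filter (fun A => A.card ≤ s)
      ⊆ (Finset.range (s + 1)).biUnion (fun j => Finset.powersetCard j T) := by
    intro A hA
    rcases Finset.mem_filter.1 hA with ⟨hA1, hA2⟩
    refine Finset.mem_biUnion.2 ⟨A.card, Finset.mem_range.2 (Nat.lt_succ_of_le hA2), ?_⟩
    exact Finset.mem_powersetCard.2 ⟨Finset.mem_powerset.1 hA1, rfl⟩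
  calc ((T.powerset).filter (fun A => A.card ≤ s)).card
      ≤ ∑ j ∈ Finset.range (s + 1), (Finset.powersetCard j T).card :=
        (Finset.card_le_card hsub).trans (Finset.card_biUnion_le)
    _ = ∑ j ∈ Finset.range (s + 1), T.card.choose j := by
        simp [Finset.card_powersetCard]
    _ ≤ (T.card + s).choose s := sum_range_choose_le _ _

lemma choose_real_bound (m s : ℕ) (hs : 1 ≤ s) :
    (m.choose s : ℝ) ≤ ((m : ℝ) / s) ^ s * Real.exp s := by
  have hspos : (0:ℝ) < s := by exact_mod_cast hs
  have hA : (m.choose s : ℝ) ≤ (m : ℝ) ^ s / (Nat.factorial s : ℝ) := by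
    have := Nat.choose_le_pow_div (α := ℝ) s m
    simpa using this
  have hB : (s : ℝ) ^ s / (Nat.factorial s : ℝ) ≤ Real.exp s := by
    have hsum := Real.sum_le_exp_of_nonneg (x := (s:ℝ)) (by positivity) (s + 1)
    have hterm : (s:ℝ) ^ s / (Nat.factorial s : ℝ)
        ≤ ∑ i ∈ Finset.range (s + 1), (s:ℝ) ^ i / (Nat.factorial i : ℝ) := by
      apply Finset.single_le_sum (f := fun i => (s:ℝ) ^ i / (Nat.factorial i : ℝ))
      · intro i _; positivity
      · simp
    exact hterm.trans hsum
  have hfactpos : (0:ℝ) < (Nat.factorial s : ℝ) := by exact_mod_cast s.factorial_pos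
  have key : (m : ℝ) ^ s / (Nat.factorial s : ℝ) ≤ ((m:ℝ)/s)^s * Real.exp s := by
    rw [div_pow]
    rw [div_le_iff₀ hfactpos] at hB ⊢
    calc (m:ℝ) ^ s ≤ (m:ℝ)^s / (s:ℝ)^s * ((s:ℝ)^s) := by
          rw [div_mul_cancel₀]; positivity
      _ ≤ (m:ℝ)^s / (s:ℝ)^s * (Real.exp s * (Nat.factorial s : ℝ)) := by
          apply mul_le_mul_of_nonneg_left hB; positivity
      _ = (m:ℝ)^s / (s:ℝ)^s * Real.exp s * (Nat.factorial s : ℝ) := by ring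
  exact hA.trans key

/-! ### The occupation count of the complement of a ball around `p` -/

attribute [local instance] Classical.propDecidable

variable [MetricSpace M] [CompactSpace M]

/-- Number of times `k < L` with `dist (φ^[k] x) p ≥ ε`. -/
noncomputable def cnt (φ : M → M) (p : M) (ε : ℝ) (L : ℕ) (x : M) : ℕ :=
  ((Finset.range L).filter (fun k => ε ≤ dist (φ^[k] x) p)).card

lemma cnt_le (φ : M → M) (p : M) (ε : ℝ) (L : ℕ) (x : M) : cnt φ p ε L x ≤ L :=
  le_trans (Finset.card_filter_le _ _) (by simp)

lemma cnt_succ (φ : M → M) (p : M) (ε : ℝ) (L : ℕ) (x : M) :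
    cnt φ p ε (L + 1) x
      = cnt φ p ε L x + (if ε ≤ dist (φ^[L] x) p then 1 else 0) := by
  unfold cnt
  rw [Finset.range_add_one, Finset.filter_insert]
  split
  · rw [Finset.card_insert_of_notMem (by simp)]
  · simp

lemma cnt_add (φ : M → M) (p : M) (ε : ℝ) (t m : ℕ) (x : M) :
    cnt φ p ε (t + m) x = cnt φ p ε t x + cnt φ p ε m (φ^[t] x) := by
  induction m with
  | zero => simp [cnt]
  | succ m ih =>
      rw [← Nat.add_assoc, cnt_succ, ih, cnt_succ, ← Function.iterate_add_apply φ m t x,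
        Nat.add_comm m t, Nat.add_assoc]

lemma isClosed_cnt_ge (φ : M → M) (hφ : Continuous φ) (p : M) (ε : ℝ) (m c : ℕ) :
    IsClosed {y : M | c ≤ cnt φ p ε m y} := by
  have hset : {y : M | c ≤ cnt φ p ε m y}
      = ⋃ A ∈ (Finset.powersetCard c (Finset.range m)),
          ⋂ k ∈ A, {y : M | ε ≤ dist (φ^[k] y) p} := by
    ext y
    simp only [Set.mem_setOf_eq, Set.mem_iUnion, Set.mem_iInter, Finset.mem_powersetCard]
    constructor
    · intro hc
      obtain ⟨A, hA, hcard⟩ := Finset.exists_subset_card_eq hc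
      refine ⟨A, ⟨hA.trans (Finset.filter_subset _ _), hcard⟩, ?_⟩
      intro k hk
      exact (Finset.mem_filter.1 (hA hk)).2
    · rintro ⟨A, ⟨hA, hcard⟩, hall⟩
      have : A ⊆ (Finset.range m).filter (fun k => ε ≤ dist (φ^[k] y) p) := by
        intro k hk
        exact Finset.mem_filter.2 ⟨hA hk, hall k hk⟩
      calc c = A.card := hcard.symm
        _ ≤ _ := Finset.card_le_card this
  rw [hset]
  apply Set.Finite.isClosed_biUnion (Finset.finite_toSet _)
  intro A _
  apply isClosed_biInter
  intro k _
  exact isClosed_le continuous_const ((hφ.iterate k).dist continuous_const)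

/-- Uniform vanishing of the density of time that orbits spend away from `p`. -/
lemma uniform_small_density (φ : M → M) (hφ : Continuous φ) (p : M)
    (horb : ∀ x : M, Tendsto (fun n : ℕ => φ^[n] x) atTop (nhds p))
    {ε η : ℝ} (hε : 0 < ε) (hη : 0 < η) :
    ∃ L₀ : ℕ, ∀ x : M, ∀ L : ℕ, L₀ ≤ L → (cnt φ p ε L x : ℝ) ≤ η * L := by
  by_contra hcon
  push_neg at hcon
  set F : ℕ → Set M := fun N => {y : M | ∀ m : ℕ, m ≤ N → η / 2 * m ≤ (cnt φ p ε m y : ℝ)}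
    with hF
  have hFclosed : ∀ N, IsClosed (F N) := by
    intro N
    have : F N = ⋂ (m : ℕ), ⋂ (_ : m ≤ N), {y : M | ⌈η / 2 * m⌉₊ ≤ cnt φ p ε m y} := by
      ext y
      simp only [hF, Set.mem_setOf_eq, Set.mem_iInter, Nat.ceil_le]
    rw [this]
    exact isClosed_iInter fun m => isClosed_iInter fun _ => isClosed_cnt_ge φ hφ p ε m _
  have hFnonempty : ∀ N : ℕ, (F N).Nonempty := by
    intro N
    obtain ⟨x, L, hL, hbad⟩ := hcon (⌈(2 * N : ℝ) / η⌉₊)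
    obtain ⟨t, htmem, htmin⟩ := Finset.exists_min_image (Finset.range (L + 1))
      (fun u => (cnt φ p ε u x : ℝ) - η / 2 * u) (by simp)
    have htL : t ≤ L := by simpa [Nat.lt_succ_iff] using htmem
    have hmin : ∀ u : ℕ, u ≤ L →
        (cnt φ p ε t x : ℝ) - η / 2 * t ≤ (cnt φ p ε u x : ℝ) - η / 2 * u := by
      intro u hu
      exact htmin u (by simpa [Nat.lt_succ_iff] using hu)
    have ht0 : (cnt φ p ε t x : ℝ) ≤ η / 2 * t := by
      have hc0 : cnt φ p ε 0 x = 0 := by simp [cnt]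
      have := hmin 0 (Nat.zero_le _)
      rw [hc0] at this
      push_cast at this
      linarith
    have hwin : ∀ m : ℕ, m ≤ L - t → η / 2 * m ≤ (cnt φ p ε m (φ^[t] x) : ℝ) := by
      intro m hm
      have htm : t + m ≤ L := by omega
      have h1 := hmin (t + m) htm
      have h2 : (cnt φ p ε (t + m) x : ℝ)
          = (cnt φ p ε t x : ℝ) + (cnt φ p ε m (φ^[t] x) : ℝ) := by
        rw [cnt_add]; push_cast; ring
      rw [h2] at h1
      push_cast at h1 ⊢
      nlinarith
    have hlen : (N : ℝ) ≤ (L - t : ℕ) := by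
      have hcl : (cnt φ p ε L x : ℝ) ≤ (cnt φ p ε t x : ℝ) + ((L - t : ℕ) : ℝ) := by
        have h3 : cnt φ p ε L x = cnt φ p ε t x + cnt φ p ε (L - t) (φ^[t] x) := by
          rw [← cnt_add]; congr 1; omega
        have h4 := cnt_le φ p ε (L - t) (φ^[t] x)
        rw [h3]; push_cast
        have : ((cnt φ p ε (L - t) (φ^[t] x) : ℕ) : ℝ) ≤ ((L - t : ℕ) : ℝ) := by
          exact_mod_cast h4
        linarith
      have hηL : η * L < (cnt φ p ε L x : ℝ) := hbad
      have htle : (t : ℝ) ≤ L := by exact_mod_cast htL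
      have hLN : (2 * N : ℝ) / η ≤ L := by
        have h5 := Nat.le_ceil ((2 * N : ℝ) / η)
        have hL' : ((⌈(2 * N : ℝ) / η⌉₊ : ℕ) : ℝ) ≤ L := by exact_mod_cast hL
        linarith
      have hw : η / 2 * L ≤ ((L - t : ℕ) : ℝ) := by nlinarith
      have hval : η / 2 * (2 * N / η) = N := by field_simp
      have := mul_le_mul_of_nonneg_left hLN (le_of_lt (half_pos hη))
      rw [hval] at this
      linarith
    refine ⟨φ^[t] x, ?_⟩
    intro m hm
    apply hwin
    have : (m : ℝ) ≤ ((L - t : ℕ) : ℝ) := le_trans (by exact_mod_cast hm) hlen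
    exact_mod_cast this
  obtain ⟨y, hy⟩ := IsCompact.nonempty_iInter_of_sequence_nonempty_isCompact_isClosed F
    (fun N => by intro y hy m hm; exact hy m (hm.trans (Nat.le_succ N)))
    hFnonempty ((hFclosed 0).isCompact) hFclosed
  have hyall : ∀ m : ℕ, η / 2 * m ≤ (cnt φ p ε m y : ℝ) := by
    intro m
    exact (Set.mem_iInter.1 hy m) m le_rfl
  obtain ⟨Nb, hNb⟩ := (Metric.tendsto_atTop.1 (horb y)) ε hε
  have hbound : ∀ m : ℕ, cnt φ p ε m y ≤ Nb := by
    intro m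
    have hsub : (Finset.range m).filter (fun k => ε ≤ dist (φ^[k] y) p)
        ⊆ Finset.range Nb := by
      intro k hk
      rcases Finset.mem_filter.1 hk with ⟨-, hk2⟩
      rcases lt_or_ge k Nb with h | h
      · exact Finset.mem_range.2 h
      · exact absurd (hNb k h) (by simpa using not_lt.2 hk2)
    simpa [cnt] using (Finset.card_le_card hsub).trans (by simp)
  obtain ⟨m, hm⟩ := exists_nat_gt ((2 * Nb : ℝ) / η)
  have h1 := hyall m
  have h2 : (cnt φ p ε m y : ℝ) ≤ Nb := by exact_mod_cast hbound m
  have hval : η / 2 * (2 * Nb / η) = Nb := by field_simp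
  have := mul_le_mul_of_nonneg_left hm.le (le_of_lt (half_pos hη))
  rw [hval] at this
  nlinarith [half_pos hη]

/-- The cardinality of any `(K,δ)`-separated set is controlled by the number of
possible "codes": the set of times spent away from `p` together with net points there. -/
lemma sep_card_le (φ : M → M) (p : M) {δ : ℝ} (hδ : 0 < δ) (F : Finset M) (np : M → M)
    (hnpF : ∀ z : M, np z ∈ F) (hnp : ∀ z : M, dist z (np z) < δ / 4) (K s : ℕ)
    (hs : ∀ x : M, cnt φ p (δ / 2) (K + 1) x ≤ s)
    (S : Finset M) (hS : IsSeparatedSet (fun x y : M => dist x y) φ K δ S) :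
    S.card ≤ ((K + 1) * F.card + s).choose s := by
  classical
  set T : Finset (ℕ × M) := (Finset.range (K + 1)) ×ˢ F with hT
  set G : M → Finset (ℕ × M) := fun x =>
    ((Finset.range (K + 1)).filter (fun k => δ / 2 ≤ dist (φ^[k] x) p)).image
      (fun k => (k, np (φ^[k] x))) with hG
  have hGmem : ∀ x : M, G x ∈ (T.powerset).filter (fun A => A.card ≤ s) := by
    intro x
    refine Finset.mem_filter.2 ⟨Finset.mem_powerset.2 ?_, ?_⟩
    · intro a ha
      rcases Finset.mem_image.1 ha with ⟨k, hk, rfl⟩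
      rcases Finset.mem_filter.1 hk with ⟨hk1, -⟩
      exact Finset.mem_product.2 ⟨hk1, hnpF _⟩
    · exact (Finset.card_image_le).trans (hs x)
  have hinj : Set.InjOn G S := by
    intro x hx y hy hxy
    by_contra hne
    obtain ⟨k, hkK, hsep⟩ := hS x hx y hy hne
    have hklt : k ∈ Finset.range (K + 1) := Finset.mem_range.2 (Nat.lt_succ_of_le hkK)
    have hfar : ∀ z w : M, np z = np w → dist z w < δ := by
      intro z w hzw
      calc dist z w ≤ dist z (np z) + dist w (np w) := by
            rw [hzw]; exact dist_triangle_right _ _ _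
        _ < δ / 4 + δ / 4 := by have := hnp z; have := hnp w; linarith
        _ ≤ δ := by linarith
    have hcase : ∀ u v : M, G u = G v → δ / 2 ≤ dist (φ^[k] u) p →
        dist (φ^[k] u) (φ^[k] v) < δ := by
      intro u v hGuv hu
      have hmem : (k, np (φ^[k] u)) ∈ G u := by
        apply Finset.mem_image.2
        exact ⟨k, Finset.mem_filter.2 ⟨hklt, hu⟩, rfl⟩
      rw [hGuv] at hmem
      rcases Finset.mem_image.1 hmem with ⟨k', hk', heq⟩
      obtain ⟨hk'k, hval⟩ := Prod.mk.injEq .. ▸ heq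
      have hnpe : np (φ^[k] v) = np (φ^[k] u) := by
        rw [hk'k] at hval
        exact hval
      exact hfar _ _ hnpe.symm
    have hlt : dist (φ^[k] x) (φ^[k] y) < δ := by
      by_cases hx' : δ / 2 ≤ dist (φ^[k] x) p
      · exact hcase x y hxy hx'
      · by_cases hy' : δ / 2 ≤ dist (φ^[k] y) p
        · have := hcase y x hxy.symm hy'
          rwa [dist_comm] at this
        · push_neg at hx' hy'
          calc dist (φ^[k] x) (φ^[k] y) ≤ dist (φ^[k] x) p + dist (φ^[k] y) p :=
                dist_triangle_right _ _ _
            _ < δ := by linarith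
    exact absurd hsep (not_le.2 hlt)
  have hcard : S.card ≤ ((T.powerset).filter (fun A => A.card ≤ s)).card :=
    Finset.card_le_card_of_injOn G (fun x _ => hGmem x) hinj
  have hTcard : T.card = (K + 1) * F.card := by
    simp [hT, Finset.card_product]
  calc S.card ≤ _ := hcard
    _ ≤ (T.card + s).choose s := card_small_subsets T s
    _ = ((K + 1) * F.card + s).choose s := by rw [hTcard]

end HtopZeroAux

/-- A continuous self-map of a compact metric space all of whose orbits converge to a
single fixed point `p` has topological entropy zero. -/
theorem htop_eq_zero_of_orbits_tendsto_fixed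
    {M : Type*} [MetricSpace M] [CompactSpace M]
    (φ : M → M) (hφ : Continuous φ) (p : M) (hp : φ p = p)
    (horb : ∀ x : M, Filter.Tendsto (fun n : ℕ => φ^[n] x) Filter.atTop (nhds p)) :
    htop (fun x y : M => dist x y) φ = 0 := by
  classical
  open HtopZeroAux in
  have key : ∀ δ : ℝ, 0 < δ →
      Tendsto (fun K : ℕ =>
        Real.log (sepNum (fun x y : M => dist x y) φ K δ) / K) atTop (nhds 0) := by
    intro δ hδ
    -- a finite δ/4-net
    obtain ⟨tset, -, tfin, tcov⟩ :=
      finite_cover_balls_of_compact (isCompact_univ (X := M)) (show (0:ℝ) < δ / 4 by linarith)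
    set F : Finset M := tfin.toFinset with hFdef
    have hnet : ∀ z : M, ∃ q ∈ F, dist z q < δ / 4 := by
      intro z
      have := tcov (Set.mem_univ z)
      rcases Set.mem_iUnion₂.1 this with ⟨q, hq1, hq2⟩
      exact ⟨q, tfin.mem_toFinset.2 hq1, by simpa [Metric.mem_ball] using hq2⟩
    choose np hnpF hnpd using hnet
    set R : ℕ := F.card with hRdef
    have hR1 : 1 ≤ R := Finset.card_pos.2 ⟨np p, hnpF p⟩
    -- the eventual bound, for each i ≥ 1
    set b : ℕ → ℝ := fun i =>
      3 * (Real.log (R + 1) + 1) / i + 3 * (Real.log i / i) with hbdef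
    have hb : Tendsto b atTop (nhds 0) := by
      have t1 : Tendsto (fun i : ℕ => 3 * (Real.log (R + 1) + 1) / (i:ℝ)) atTop (nhds 0) :=
        tendsto_const_div_atTop_nhds_zero_nat _
      have t2 : Tendsto (fun i : ℕ => Real.log i / (i:ℝ)) atTop (nhds 0) := by
        have := Real.isLittleO_log_id_atTop.tendsto_div_nhds_zero
        exact this.comp tendsto_natCast_atTop_atTop
      have := t1.add (t2.const_mul 3)
      simpa [hbdef, mul_comm, mul_div_assoc] using this
    have hbound : ∀ i : ℕ, 1 ≤ i → ∃ N : ℕ, ∀ K : ℕ, N ≤ K →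
        0 ≤ Real.log (sepNum (fun x y : M => dist x y) φ K δ) / K ∧
        Real.log (sepNum (fun x y : M => dist x y) φ K δ) / K ≤ b i := by
      intro i hi
      have hipos : (0:ℝ) < i := by exact_mod_cast hi
      obtain ⟨L₀, hL₀⟩ := uniform_small_density φ hφ p horb
        (ε := δ / 2) (η := 1 / (i:ℝ)) (by linarith) (by positivity)
      refine ⟨max L₀ (max i 1), ?_⟩
      intro K hK
      have hKL₀ : L₀ ≤ K := le_trans (le_max_left _ _) hK
      have hKi : i ≤ K := le_trans (le_max_of_le_right (le_max_left _ _)) hK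
      have hK1 : 1 ≤ K := le_trans hi hKi
      have hKpos : (0:ℝ) < K := by exact_mod_cast hK1
      set n : ℕ := K + 1 with hndef
      set s : ℕ := n / i + 1 with hsdef
      have hs1 : 1 ≤ s := Nat.le_add_left _ _
      have hspos : (0:ℝ) < s := by exact_mod_cast hs1
      -- every orbit spends at most s of the first n steps far from p
      have hcnt : ∀ x : M, cnt φ p (δ / 2) n x ≤ s := by
        intro x
        have h1 : (cnt φ p (δ / 2) n x : ℝ) ≤ 1 / (i:ℝ) * n :=
          hL₀ x n (le_trans hKL₀ (Nat.le_succ _))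
        have h1' : (cnt φ p (δ / 2) n x : ℝ) ≤ (n : ℝ) / i := by
          have heq : (1:ℝ) / i * n = (n : ℝ) / i := by ring
          rw [heq] at h1
          exact h1
        have h2 : cnt φ p (δ / 2) n x ≤ n / i := by
          rw [Nat.le_div_iff_mul_le (by omega)]
          exact_mod_cast (le_div_iff₀ hipos).1 h1'
        omega
      set B : ℕ := (n * R + s).choose s with hBdef
      -- sepNum bounds
      have hub : ∀ m ∈ {m : ℕ | ∃ S : Finset M,
          IsSeparatedSet (fun x y : M => dist x y) φ K δ S ∧ S.card = m}, m ≤ B := by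
        rintro m ⟨S, hSsep, rfl⟩
        have := sep_card_le φ p hδ F np hnpF hnpd K s hcnt S hSsep
        simpa [hBdef, hndef] using this
      have hBdd : BddAbove {m : ℕ | ∃ S : Finset M,
          IsSeparatedSet (fun x y : M => dist x y) φ K δ S ∧ S.card = m} := ⟨B, hub⟩
      have hsep_le : sepNum (fun x y : M => dist x y) φ K δ ≤ B :=
        csSup_le ⟨0, ∅, fun x hx => absurd hx (Finset.notMem_empty x), rfl⟩ hub
      have hone : 1 ≤ sepNum (fun x y : M => dist x y) φ K δ := by
        apply le_csSup hBdd
        refine ⟨{p}, ?_, Finset.card_singleton p⟩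
        intro x hx y hy hne
        rw [Finset.mem_singleton] at hx hy
        exact absurd (hx.trans hy.symm) hne
      have honeR : (1:ℝ) ≤ (sepNum (fun x y : M => dist x y) φ K δ : ℝ) := by
        exact_mod_cast hone
      constructor
      · exact div_nonneg (Real.log_nonneg honeR) hKpos.le
      -- now the quantitative bound
      have hchoose : (B : ℝ) ≤ (((n * R + s : ℕ) : ℝ) / s) ^ s * Real.exp s := by
        rw [hBdef]; exact choose_real_bound _ _ hs1
      have hfrac : (((n * R + s : ℕ) : ℝ) / s) ≤ (R : ℝ) * i + 1 := by
        rw [div_le_iff₀ hspos]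
        have hni : (n : ℝ) < (s : ℝ) * i := by
          have hlt : n < s * i := by
            have h1 := Nat.div_add_mod n i
            have h2 : n % i < i := Nat.mod_lt _ (by omega)
            calc n = i * (n / i) + n % i := h1.symm
              _ < i * (n / i) + i := by omega
              _ = (n / i + 1) * i := by ring
          exact_mod_cast hlt
        have hRpos : (0:ℝ) ≤ (R:ℝ) := by positivity
        have hnK : (n : ℝ) = (K : ℝ) + 1 := by rw [hndef]; push_cast; ring
        have hsq : (s : ℝ) = ((n / i : ℕ) : ℝ) + 1 := by rw [hsdef]; push_cast; ring
        have hkey := mul_le_mul_of_nonneg_left hni.le hRpos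
        have hkey2 : (R:ℝ) * ((K:ℝ) + 1) ≤ (R:ℝ) * ((((n / i : ℕ) : ℝ) + 1) * i) := by
          rw [← hnK, ← hsq]
          calc (R:ℝ) * (n:ℝ) ≤ (R:ℝ) * ((s:ℝ) * i) := hkey
            _ = (R:ℝ) * ((s:ℝ) * i) := rfl
        push_cast
        nlinarith [hkey2]
      have hbase_nonneg : (0:ℝ) ≤ (((n * R + s : ℕ) : ℝ) / s) := by positivity
      have hpow : ((((n * R + s : ℕ) : ℝ) / s)) ^ s ≤ ((R : ℝ) * i + 1) ^ s :=
        pow_le_pow_left₀ hbase_nonneg hfrac s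
      have hsep_real : (sepNum (fun x y : M => dist x y) φ K δ : ℝ)
          ≤ ((R : ℝ) * i + 1) ^ s * Real.exp s := by
        calc (sepNum (fun x y : M => dist x y) φ K δ : ℝ) ≤ (B : ℝ) := by exact_mod_cast hsep_le
          _ ≤ (((n * R + s : ℕ) : ℝ) / s) ^ s * Real.exp s := hchoose
          _ ≤ ((R : ℝ) * i + 1) ^ s * Real.exp s :=
              mul_le_mul_of_nonneg_right hpow (Real.exp_pos _).le
      have hRi1 : (1:ℝ) ≤ (R : ℝ) * i + 1 := by
        have : (0:ℝ) ≤ (R:ℝ) * i := by positivity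
        linarith
      have hlog : Real.log (sepNum (fun x y : M => dist x y) φ K δ)
          ≤ (s : ℝ) * (Real.log ((R : ℝ) * i + 1) + 1) := by
        calc Real.log (sepNum (fun x y : M => dist x y) φ K δ)
            ≤ Real.log (((R : ℝ) * i + 1) ^ s * Real.exp s) :=
              Real.log_le_log (by linarith) hsep_real
          _ = (s : ℝ) * Real.log ((R : ℝ) * i + 1) + s := by
              rw [Real.log_mul (by positivity) (Real.exp_ne_zero _), Real.log_pow,
                Real.log_exp]
          _ = (s : ℝ) * (Real.log ((R : ℝ) * i + 1) + 1) := by ring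
      -- s ≤ 3K/i
      have hsK : (s : ℝ) ≤ 3 * K / i := by
        have h1 : ((n / i : ℕ) : ℝ) ≤ (n : ℝ) / i := Nat.cast_div_le
        have h2 : (n : ℝ) ≤ 2 * K := by
          rw [hndef]; push_cast
          have : (1:ℝ) ≤ K := by exact_mod_cast hK1
          linarith
        have h3 : (1:ℝ) ≤ (K : ℝ) / i := by
          rw [le_div_iff₀ hipos]
          have : (i:ℝ) ≤ K := by exact_mod_cast hKi
          linarith
        have : (s : ℝ) = ((n / i : ℕ) : ℝ) + 1 := by rw [hsdef]; push_cast; ring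
        rw [this]
        calc ((n / i : ℕ) : ℝ) + 1 ≤ (n : ℝ) / i + (K:ℝ)/i := by linarith
          _ ≤ 2 * K / i + (K:ℝ)/i := by
              linarith [div_le_div_of_nonneg_right h2 hipos.le]
          _ = 3 * K / i := by ring
      have hlogRi : Real.log ((R : ℝ) * i + 1) + 1 ≤ Real.log (R + 1) + Real.log i + 1 := by
        have hle : (R : ℝ) * i + 1 ≤ ((R : ℝ) + 1) * i := by
          have : (1:ℝ) ≤ i := by exact_mod_cast hi
          nlinarith
        have := Real.log_le_log (by positivity) hle
        rw [Real.log_mul (by positivity) (by positivity)] at this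
        linarith
      have hlogpos : 0 ≤ Real.log ((R : ℝ) * i + 1) + 1 := by
        have := Real.log_nonneg hRi1
        linarith
      have hfinal : Real.log (sepNum (fun x y : M => dist x y) φ K δ) / K ≤ b i := by
        rw [div_le_iff₀ hKpos]
        have hbK : b i * K = (3 * K / i) * (Real.log (R + 1) + Real.log i + 1) := by
          rw [hbdef]; field_simp; ring
        rw [hbK]
        calc Real.log (sepNum (fun x y : M => dist x y) φ K δ)
            ≤ (s : ℝ) * (Real.log ((R : ℝ) * i + 1) + 1) := hlog
          _ ≤ (3 * K / i) * (Real.log ((R : ℝ) * i + 1) + 1) :=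
              mul_le_mul_of_nonneg_right hsK hlogpos
          _ ≤ (3 * K / i) * (Real.log (R + 1) + Real.log i + 1) := by
              apply mul_le_mul_of_nonneg_left hlogRi
              positivity
      exact hfinal
    -- assemble the limit
    rw [Metric.tendsto_atTop]
    intro γ hγ
    obtain ⟨I, hI⟩ := Metric.tendsto_atTop.1 hb γ hγ
    set i : ℕ := max I 1 with hidef
    have hbi : b i < γ := by
      have := hI i (le_max_left _ _)
      rw [Real.dist_eq, sub_zero] at this
      exact lt_of_le_of_lt (le_abs_self _) this
    obtain ⟨N, hN⟩ := hbound i (le_max_right _ _)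
    refine ⟨N, ?_⟩
    intro K hK
    obtain ⟨h0, h1⟩ := hN K hK
    rw [Real.dist_eq, sub_zero, abs_of_nonneg h0]
    exact lt_of_le_of_lt h1 hbi
  -- from the limit to the limsup
  have hlimsup : ∀ δ' : {δ : ℝ // 0 < δ},
      Filter.limsup (fun K : ℕ =>
        ((Real.log (sepNum (fun x y : M => dist x y) φ K δ'.1) / K : ℝ) : EReal))
        Filter.atTop = (0 : EReal) := by
    intro δ'
    have h := key δ'.1 δ'.2
    have h2 : Tendsto (fun K : ℕ =>
        ((Real.log (sepNum (fun x y : M => dist x y) φ K δ'.1) / K : ℝ) : EReal))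
        atTop (nhds ((0:ℝ) : EReal)) := EReal.tendsto_coe.2 h
    rw [show ((0:ℝ) : EReal) = (0 : EReal) from rfl] at h2
    exact h2.limsup_eq
  have : Nonempty {δ : ℝ // 0 < δ} := ⟨⟨1, one_pos⟩⟩
  rw [htop]
  rw [iSup_congr hlimsup]
  exact iSup_const
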